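/- Setting m(ℓ_∞,ℓ'_∞) = (1/2π)(θ - θ' + i·Tr Log(-w(w')⁻¹)) + n/2 for transversal pairs, where ℓ_∞ ≡ (w,θ), ℓ'_∞ ≡ (w',θ') with det w = e^{iθ}, det w' = e^{iθ'}, the value m(ℓ_∞,ℓ'_∞) is an integer. -/

import Mathlib

open Matrix Complex

noncomputable section

/-- Phase space ℝ^{2n} = ℝ^n_x × ℝ^n_p. -/
abbrev V (n : ℕ) := (Fin n → ℝ) × (Fin n → ℝ)

/-- Standard symplectic form σ(z,z') = p·x' - p'·x. -/
def Omega (n : ℕ) (z w : V n) : ℝ := z.2 ⬝ᵥ w.1 - w.2 ⬝ᵥ z.1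

/-- Lagrangian plane: n-dimensional subspace on which σ vanishes. -/
def IsLagrangian (n : ℕ) (L : Submodule ℝ (V n)) : Prop :=
  Module.finrank ℝ L = n ∧ ∀ z ∈ L, ∀ w ∈ L, Omega n z w = 0

/-- Symplectic linear map. -/
def IsSymplectic (n : ℕ) (S : V n →ₗ[ℝ] V n) : Prop :=
  Function.Bijective S ∧ ∀ z w, Omega n (S z) (S w) = Omega n z w

/-- Dimension of a maximal subspace on which Q is positive. -/
def posIndex {E : Type*} [AddCommGroup E] [Module ℝ E] (Q : E → ℝ) : ℕ :=
  sSup {k | ∃ W : Submodule ℝ E, Module.finrank ℝ W = k ∧ ∀ v ∈ W, v ≠ 0 → 0 < Q v}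

def negIndex {E : Type*} [AddCommGroup E] [Module ℝ E] (Q : E → ℝ) : ℕ :=
  posIndex fun v => -Q v

/-- σ(z,z') + σ(z',z'') + σ(z'',z) on ℓ × ℓ' × ℓ''. -/
def tripleForm (n : ℕ) (L L' L'' : Submodule ℝ (V n)) : (L × L' × L'') → ℝ :=
  fun t => Omega n t.1 t.2.1 + Omega n t.2.1 t.2.2 + Omega n t.2.2 t.1

/-- Kashiwara signature τ(ℓ,ℓ',ℓ''). -/
def tau (n : ℕ) (L L' L'' : Submodule ℝ (V n)) : ℤ :=
  (posIndex (tripleForm n L L' L'') : ℤ) - negIndex (tripleForm n L L' L'')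

/-- ∂dim(ℓ,ℓ',ℓ''). -/
def ddim (n : ℕ) (L L' L'' : Submodule ℝ (V n)) : ℤ :=
  (Module.finrank ℝ ↥(L ⊓ L') : ℤ) - Module.finrank ℝ ↥(L ⊓ L'')
    + Module.finrank ℝ ↥(L' ⊓ L'')

/-- Index of inertia. -/
def Inert (n : ℕ) (L L' L'' : Submodule ℝ (V n)) : ℤ :=
  (tau n L L' L'' - ddim n L L' L'' + n) / 2

/-- Real and imaginary parts of a complex matrix. -/
def reM (n : ℕ) (u : Matrix (Fin n) (Fin n) ℂ) : Matrix (Fin n) (Fin n) ℝ :=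
  of fun i j => (u i j).re

def imM (n : ℕ) (u : Matrix (Fin n) (Fin n) ℂ) : Matrix (Fin n) (Fin n) ℝ :=
  of fun i j => (u i j).im

/-- The identification A+iB ↦ [[A,-B],[B,A]] acting on ℝ^{2n}. -/
def uReal (n : ℕ) (u : Matrix (Fin n) (Fin n) ℂ) : V n →ₗ[ℝ] V n where
  toFun z := (reM n u *ᵥ z.1 - imM n u *ᵥ z.2, imM n u *ᵥ z.1 + reM n u *ᵥ z.2)
  map_add' a b := by
    ext i <;> (simp [Matrix.mulVec_add]; try ring)
  map_smul' c a := by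
    ext i <;> (simp [Matrix.mulVec_smul]; try ring)

/-- The momentum plane ℓ_p = 0 × ℝ^n. -/
def ellP (n : ℕ) : Submodule ℝ (V n) := Submodule.prod ⊥ ⊤



lemma perm_eq_one_of_fixes {N : ℕ} (σ : Equiv.Perm (Fin N)) (i : Fin N)
    (h : ∀ j, j ≠ i → σ j = j) : σ = 1 := by
  have hi : σ i = i := by
    by_contra hne
    exact hne (σ.injective (h (σ i) hne))
  ext j
  by_cases hj : j = i
  · simp [hj, hi]
  · simp [h j hj]

lemma det_exp_aux {N : ℕ} (A : Matrix (Fin N) (Fin N) ℂ) :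
    (NormedSpace.exp A).det = Complex.exp A.trace := by
  letI : NormedRing (Matrix (Fin N) (Fin N) ℂ) := Matrix.linftyOpNormedRing
  letI : NormedAlgebra ℂ (Matrix (Fin N) (Fin N) ℂ) := Matrix.linftyOpNormedAlgebra
  letI : CompleteSpace (Matrix (Fin N) (Fin N) ℂ) := FiniteDimensional.complete ℂ _
  set E : ℝ → Matrix (Fin N) (Fin N) ℂ := fun u => NormedSpace.exp ((u : ℂ) • A) with hEdef
  have hE0 : E 0 = 1 := by simp [hEdef, NormedSpace.exp_zero]
  have hE : ∀ u : ℝ, HasDerivAt E (A * E u) u := by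
    intro u
    have h1 := hasDerivAt_exp_smul_const' (𝕂 := ℂ) A (u : ℂ)
    convert h1.scomp u Complex.ofRealCLM.hasDerivAt using 1
    · rfl
    · rfl
    · rfl
    · rfl
    · simp [hEdef]
      rfl
  -- entry derivatives
  have hentry : ∀ (u : ℝ) (i j : Fin N),
      HasDerivAt (fun v => E v i j) ((A * E u) i j) u := by
    intro u i j
    let φ : Matrix (Fin N) (Fin N) ℂ →L[ℝ] ℂ :=
      LinearMap.toContinuousLinearMap
      { toFun := fun M => M i j, map_add' := fun _ _ => rfl, map_smul' := fun _ _ => rfl }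
    exact φ.hasFDerivAt.comp_hasDerivAt u (hE u)
  set g : ℝ → ℂ := fun u => (E u).det with hgdef
  set D : ℝ → ℂ := fun u => ∑ σ : Equiv.Perm (Fin N),
      ((Equiv.Perm.sign σ : ℤ) : ℂ) *
        ∑ i, (∏ j ∈ Finset.univ.erase i, E u (σ j) j) • ((A * E u) (σ i) i) with hDdef
  have hg : ∀ u : ℝ, HasDerivAt g (D u) u := by
    intro u
    have h1 : ∀ σ : Equiv.Perm (Fin N),
        HasDerivAt (fun v => ∏ i, E v (σ i) i)
          (∑ i, (∏ j ∈ Finset.univ.erase i, E u (σ j) j) • ((A * E u) (σ i) i)) u := by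
      intro σ
      exact HasDerivAt.fun_finsetProd (fun i _ => hentry u (σ i) i)
    have h2 := HasDerivAt.fun_sum (u := Finset.univ)
      (fun σ _ => (h1 σ).const_mul (((Equiv.Perm.sign σ : ℤ) : ℂ)))
    have hfun : g = fun v => ∑ σ : Equiv.Perm (Fin N),
        ((Equiv.Perm.sign σ : ℤ) : ℂ) * ∏ i, E v (σ i) i := by
      funext v
      exact Matrix.det_apply' (E v)
    rw [hfun, hDdef]
    exact h2
  -- multiplicativity
  have hmul : ∀ u v : ℝ, g (u + v) = g u * g v := by
    intro u v
    have hc : Commute ((u : ℂ) • A) ((v : ℂ) • A) :=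
      ((Commute.refl A).smul_left _).smul_right _
    have hEuv : E (u + v) = E u * E v := by
      rw [hEdef]
      simp only [Complex.ofReal_add, add_smul]
      exact Matrix.exp_add_of_commute _ _ hc
    rw [hgdef]
    simp only [hEuv, Matrix.det_mul]
  -- D u = g u * D 0
  have hDu : ∀ u : ℝ, D u = g u * D 0 := by
    intro u
    have h3 : HasDerivAt (fun s : ℝ => u + s) 1 0 := by
      simpa using (hasDerivAt_id (0 : ℝ)).const_add u
    have A1 : HasDerivAt (fun s : ℝ => g (u + s)) (D u) 0 := by
      have h4 : HasDerivAt (g ∘ fun s : ℝ => u + s) ((1 : ℝ) • D (u + 0)) 0 :=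
        HasDerivAt.scomp 0 (hg (u + 0)) h3
      simpa [Function.comp_def] using h4
    have A2 : HasDerivAt (fun s : ℝ => g (u + s)) (g u * D 0) 0 := by
      have h2 : HasDerivAt (fun s : ℝ => g u * g s) (g u * D 0) 0 := (hg 0).const_mul (g u)
      have heq : (fun s : ℝ => g (u + s)) = fun s : ℝ => g u * g s := funext fun s => hmul u s
      rw [heq]
      exact h2
    exact A1.unique A2
  -- D 0 = trace A
  have hD0 : D 0 = A.trace := by
    rw [hDdef]
    simp only [hE0, mul_one]
    rw [Finset.sum_eq_single (1 : Equiv.Perm (Fin N))]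
    · have hone : ∀ i : Fin N,
          (∏ j ∈ Finset.univ.erase i, (1 : Matrix (Fin N) (Fin N) ℂ) ((1 : Equiv.Perm (Fin N)) j) j) = 1 := by
        intro i
        apply Finset.prod_eq_one
        intro j _
        exact Matrix.one_apply_eq _
      simp [hone, Matrix.trace, Matrix.diag]
    · intro σ _ hσ
      have hz : ∀ i : Fin N,
          (∏ j ∈ Finset.univ.erase i, (1 : Matrix (Fin N) (Fin N) ℂ) (σ j) j) = 0 := by
        intro i
        obtain ⟨j, hji, hj⟩ : ∃ j, j ≠ i ∧ σ j ≠ j := by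
          by_contra hcon
          push_neg at hcon
          exact hσ (perm_eq_one_of_fixes σ i fun j hj => hcon j hj)
        exact Finset.prod_eq_zero (Finset.mem_erase.mpr ⟨hji, Finset.mem_univ j⟩)
          (Matrix.one_apply_ne hj)
      simp [hz]
    · simp
  -- ODE
  have hg' : ∀ u : ℝ, HasDerivAt g (g u * A.trace) u := by
    intro u
    have := hg u
    rwa [hDu u, hD0] at this
  have hexp : ∀ u : ℝ, HasDerivAt (fun v : ℝ => Complex.exp (-(A.trace * v)))
      (-(A.trace * Complex.exp (-(A.trace * u)))) u := by
    intro u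
    have hexpC : HasDerivAt (fun z : ℂ => Complex.exp (-(A.trace * z)))
        (-(A.trace * Complex.exp (-(A.trace * (u : ℂ))))) (u : ℂ) := by
      have h1 : HasDerivAt (fun z : ℂ => Complex.exp (-(A.trace * z)))
          (Complex.exp (-(A.trace * (u : ℂ))) * -(A.trace * 1)) (u : ℂ) :=
        (Complex.hasDerivAt_exp _).comp _ (((hasDerivAt_id ((u : ℂ))).const_mul A.trace).neg)
      convert h1 using 1
      ring
    exact HasDerivAt.comp_ofReal (e := fun z : ℂ => Complex.exp (-(A.trace * z))) hexpC
  have hzero : ∀ u : ℝ, HasDerivAt (fun v : ℝ => g v * Complex.exp (-(A.trace * v))) 0 u := by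
    intro u
    have hm := (hg' u).mul (hexp u)
    have heq : g u * A.trace * Complex.exp (-(A.trace * u))
        + g u * -(A.trace * Complex.exp (-(A.trace * u))) = 0 := by ring
    rwa [heq] at hm
  have hconst : g 1 * Complex.exp (-(A.trace * (1 : ℝ)))
      = g 0 * Complex.exp (-(A.trace * (0 : ℝ))) :=
    is_const_of_deriv_eq_zero (fun u => (hzero u).differentiableAt)
      (fun u => (hzero u).deriv) 1 0
  have hg0 : g 0 = 1 := by simp [hgdef, hE0]
  have key : g 1 * Complex.exp (-A.trace) = 1 := by
    rw [hg0] at hconst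
    simpa using hconst
  have h1' : g 1 = Complex.exp A.trace := by
    have h4 := congrArg (fun z => z * Complex.exp A.trace) key
    simp only [one_mul, mul_assoc, ← Complex.exp_add] at h4
    simpa using h4
  have hE1 : E 1 = NormedSpace.exp A := by simp [hEdef]
  calc (NormedSpace.exp A).det = (E 1).det := by rw [hE1]
    _ = Complex.exp A.trace := h1'

/-- for transversal ℓ, ℓ' with lifts (w,θ), (w',θ'), the quantity
(1/2π)(θ - θ' + i Tr Log(-w(w')⁻¹)) + n/2 is an integer.  The principal logarithm
Log(-w(w')⁻¹) is characterized as the matrix Lg with exp Lg = -w(w')⁻¹ whose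
spectrum lies in the strip |Im z| < π. -/
theorem leray_index_is_integer (n : ℕ) (u u' : Matrix (Fin n) (Fin n) ℂ)
    (hu : u ∈ Matrix.unitaryGroup (Fin n) ℂ) (hu' : u' ∈ Matrix.unitaryGroup (Fin n) ℂ)
    (w w' : Matrix (Fin n) (Fin n) ℂ) (hw : w = u * uᵀ) (hw' : w' = u' * u'ᵀ)
    (L L' : Submodule ℝ (V n))
    (hL : L = (ellP n).map (uReal n u)) (hL' : L' = (ellP n).map (uReal n u'))
    (htrans : L ⊓ L' = ⊥)
    (θ θ' : ℝ) (hθ : w.det = Complex.exp (Complex.I * θ)) (hθ' : w'.det = Complex.exp (Complex.I * θ'))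
    (Lg : Matrix (Fin n) (Fin n) ℂ)
    (hLg : NormedSpace.exp Lg = -(w * w'⁻¹))
    (hstrip : ∀ c ∈ spectrum ℂ Lg, -Real.pi < c.im ∧ c.im < Real.pi) :
    ∃ k : ℤ, (1 / (2 * (Real.pi : ℂ))) * ((θ : ℂ) - (θ' : ℂ) + Complex.I * Lg.trace)
      + (n : ℂ) / 2 = (k : ℂ) := by
  have hdet' : w'.det ≠ 0 := by rw [hθ']; exact Complex.exp_ne_zero _
  have hexpeq : Complex.exp Lg.trace
      = Complex.exp ((n : ℂ) * ((Real.pi : ℂ) * Complex.I)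
        + (Complex.I * (θ : ℂ) - Complex.I * (θ' : ℂ))) := by
    calc Complex.exp Lg.trace = (NormedSpace.exp Lg).det := (det_exp_aux Lg).symm
      _ = (-(w * w'⁻¹)).det := by rw [hLg]
      _ = (-1) ^ n * (w.det * w'⁻¹.det) := by
          rw [Matrix.det_neg, Matrix.det_mul]; simp [Fintype.card_fin]
      _ = (-1) ^ n * (Complex.exp (Complex.I * θ) * (Complex.exp (Complex.I * θ'))⁻¹) := by
          rw [Matrix.det_nonsing_inv, Ring.inverse_eq_inv', hθ, hθ']
      _ = Complex.exp ((n : ℂ) * ((Real.pi : ℂ) * Complex.I))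
            * Complex.exp (Complex.I * θ - Complex.I * θ') := by
          rw [← div_eq_mul_inv, ← Complex.exp_sub, ← Complex.exp_pi_mul_I,
            ← Complex.exp_nat_mul]
      _ = Complex.exp ((n : ℂ) * ((Real.pi : ℂ) * Complex.I)
            + (Complex.I * (θ : ℂ) - Complex.I * (θ' : ℂ))) := (Complex.exp_add _ _).symm
  obtain ⟨m, hm⟩ := Complex.exp_eq_exp_iff_exists_int.mp hexpeq
  have htr : Complex.I * Lg.trace
      = ((θ' : ℂ) - (θ : ℂ)) - (n : ℂ) * (Real.pi : ℂ) - 2 * (Real.pi : ℂ) * (m : ℂ) := by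
    linear_combination Complex.I * hm
      + ((n : ℂ) * (Real.pi : ℂ) + (θ : ℂ) - (θ' : ℂ) + 2 * (Real.pi : ℂ) * (m : ℂ))
        * Complex.I_mul_I
  refine ⟨-m, ?_⟩
  have hπ : (Real.pi : ℂ) ≠ 0 := Complex.ofReal_ne_zero.mpr Real.pi_ne_zero
  rw [htr]
  push_cast
  field_simp
  ring
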